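/- Let C ⊆ F^n be a code over a finite field F and S ⊆ [n]. If the S-restricted Hamming balls of radius 2r around distinct codewords (restricted to coordinates outside S) are pairwise disjoint (equivalently, any two distinct codewords satisfy Δ_S(c,c') > 4r), then for x uniform on F^{[n]∖S}, the probability that there exists c ∈ C with Δ_S(c,x) ≤ r is at most |B_r|/|B_{2r}|, where |B_t| is the cardinality of an S-restricted Hamming ball of radius t. -/

import Mathlib

/-- if any two distinct codewords of `C` satisfy `Δ_S(c,c') > 4r`
(so that `S`-restricted balls of radius `2r` are pairwise disjoint), then for `x`
uniform on `F^{[n]∖S}`, `P(∃ c ∈ C, Δ_S(c,x) ≤ r) ≤ |B_r|/|B_{2r}|`; stated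
multiplicatively:  (#bad x) · |B_{2r}| ≤ |B_r| · |F^{[n]∖S}|. -/
theorem stmt4 {F : Type*} [Field F] [Fintype F] [DecidableEq F] {n r : ℕ}
    (C : Set (Fin n → F)) (S : Finset (Fin n))
    (hC : ∀ c ∈ C, ∀ c' ∈ C, c ≠ c' →
      4 * r < hammingDist (fun i : {i : Fin n // i ∉ S} => c i.1)
        (fun i : {i : Fin n // i ∉ S} => c' i.1)) :
    Nat.card {x : {i : Fin n // i ∉ S} → F // ∃ c ∈ C,
        hammingDist (fun i : {i : Fin n // i ∉ S} => c i.1) x ≤ r}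
      * Nat.card {x : {i : Fin n // i ∉ S} → F // hammingDist (fun _ => (0 : F)) x ≤ 2 * r}
    ≤ Nat.card {x : {i : Fin n // i ∉ S} → F // hammingDist (fun _ => (0 : F)) x ≤ r}
      * Fintype.card F ^ (Fintype.card {i : Fin n // i ∉ S}) := by
  classical
  set α := ({i : Fin n // i ∉ S} → F) with hα
  let res : (Fin n → F) → α := fun c => (fun i : {i : Fin n // i ∉ S} => c i.1)
  let D : Finset α := Finset.univ.filter (fun d => ∃ c ∈ C, res c = d)
  have hDdist : ∀ d ∈ D, ∀ d' ∈ D, d ≠ d' → 4 * r < hammingDist d d' := by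
    intro d hd d' hd' hne
    simp only [D, Finset.mem_filter] at hd hd'
    obtain ⟨c, hc, rfl⟩ := hd.2
    obtain ⟨c', hc', rfl⟩ := hd'.2
    exact hC c hc c' hc' (fun h => hne (by rw [h]))
  let ball : ℕ → α → Finset α := fun t d => Finset.univ.filter (fun x => hammingDist d x ≤ t)
  have key : ∀ a b : α, hammingDist 0 (a - b) = hammingDist b a := by
    intro a b
    rw [hammingDist_eq_hammingNorm, hammingDist_eq_hammingNorm, neg_zero, zero_add, neg_add_eq_sub]
  have hballcard : ∀ t (d : α), (ball t d).card = (ball t 0).card := by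
    intro t d
    apply Finset.card_bij' (fun x _ => x - d) (fun y _ => y + d)
    · intro x hx
      simp only [ball, Finset.mem_filter, Finset.mem_univ, true_and] at hx ⊢
      rwa [key]
    · intro y hy
      simp only [ball, Finset.mem_filter, Finset.mem_univ, true_and] at hy ⊢
      rwa [← key, add_sub_cancel_right]
    · intro x _; simp
    · intro y _; simp
  -- bad set
  let Bad : Finset α := Finset.univ.filter
    (fun x => ∃ c ∈ C, hammingDist (res c) x ≤ r)
  have hBadeq : Bad = D.biUnion (fun d => ball r d) := by
    ext x
    simp only [Bad, D, ball, Finset.mem_filter, Finset.mem_biUnion, Finset.mem_univ, true_and]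
    constructor
    · rintro ⟨c, hc, hle⟩
      exact ⟨res c, ⟨c, hc, rfl⟩, hle⟩
    · rintro ⟨d, ⟨c, hc, rfl⟩, hle⟩
      exact ⟨c, hc, hle⟩
  have hdisj : ∀ t, 2 * t ≤ 4 * r → ∀ d ∈ D, ∀ d' ∈ D, d ≠ d' →
      Disjoint (ball t d) (ball t d') := by
    intro t ht d hd d' hd' hne
    rw [Finset.disjoint_left]
    intro x hx hx'
    simp only [ball, Finset.mem_filter] at hx hx'
    have := hammingDist_triangle d x d'
    rw [hammingDist_comm x d'] at this
    have h4 := hDdist d hd d' hd' hne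
    omega
  have hBadcard : Bad.card = D.card * (ball r 0).card := by
    rw [hBadeq, Finset.card_biUnion (hdisj r (by omega))]
    rw [Finset.sum_congr rfl (fun d _ => hballcard r d), Finset.sum_const, smul_eq_mul]
  have hpack : D.card * (ball (2 * r) 0).card ≤ Fintype.card α := by
    have h1 : (D.biUnion (fun d => ball (2 * r) d)).card ≤ Fintype.card α := by
      simpa using Finset.card_le_card (Finset.subset_univ _)
    rwa [Finset.card_biUnion (hdisj (2 * r) (by omega)),
      Finset.sum_congr rfl (fun d _ => hballcard (2 * r) d), Finset.sum_const,
      smul_eq_mul] at h1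
  -- translate Nat.card to Finset cards
  have e1 : Nat.card {x : {i : Fin n // i ∉ S} → F // ∃ c ∈ C,
      hammingDist (fun i : {i : Fin n // i ∉ S} => c i.1) x ≤ r} = Bad.card := by
    rw [Nat.card_eq_fintype_card, Fintype.card_subtype]
  have e2 : Nat.card {x : {i : Fin n // i ∉ S} → F //
      hammingDist (fun _ => (0 : F)) x ≤ 2 * r} = (ball (2 * r) 0).card := by
    rw [Nat.card_eq_fintype_card, Fintype.card_subtype]
    congr!
  have e3 : Nat.card {x : {i : Fin n // i ∉ S} → F //
      hammingDist (fun _ => (0 : F)) x ≤ r} = (ball r 0).card := by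
    rw [Nat.card_eq_fintype_card, Fintype.card_subtype]
    congr!
  have e4 : Fintype.card F ^ (Fintype.card {i : Fin n // i ∉ S}) = Fintype.card α := by
    exact (Fintype.card_fun).symm
  rw [e1, e2, e3, e4, hBadcard]
  calc D.card * (ball r 0).card * (ball (2 * r) 0).card
      = (ball r 0).card * (D.card * (ball (2 * r) 0).card) := by ring
    _ ≤ (ball r 0).card * Fintype.card α := Nat.mul_le_mul_left _ hpack
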